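/- For every nonzero P ∈ O[x]: the element P^S(θ) ∈ L satisfies v(P^S(θ)) ≥ 0 and its residue class in 𝔽_L equals R_λ(P)(γ̄); moreover v(P(θ) − P⁰(θ)) > H(P). -/

import Mathlib

/-!
Common framework: a finite extension `K` of `ℚ_[p]` inside a fixed algebraic closure
`Om p := AlgebraicClosure ℚ_[p]`, its ring of integers `Oring p K` (the integral closure
of `ℤ_[p]` in `K`), the `ℚ`-valued valuation `w` on `Om p` extending the valuation of `K`
normalized by `w(K^×) = ℤ`, a fixed uniformizer `π`, and the whole Newton polygon /
residual polynomial machinery of Montes–Guàrdia–Nart in order one.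
-/

open Polynomial

open scoped Classical

set_option maxHeartbeats 1000000
set_option synthInstance.maxHeartbeats 1000000

noncomputable section

variable (p : ℕ) [Fact p.Prime]

/-- A fixed algebraic closure of `ℚ_[p]`. -/
abbrev Om : Type _ := AlgebraicClosure ℚ_[p]

/-- The ring of integers (integral closure of `ℤ_[p]`) of a subfield `K` of the
algebraic closure of `ℚ_[p]`. -/
def Oring (K : IntermediateField ℚ_[p] (Om p)) : Subring K :=
  letI : Algebra ℤ_[p] K :=
    ((algebraMap ℚ_[p] K).comp (PadicInt.Coe.ringHom)).toAlgebra
  (integralClosure ℤ_[p] K).toSubring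

/-- Extract the integer value of an element of `WithTop ℚ` (junk value `0`). -/
def zOf (q : WithTop ℚ) : ℤ :=
  if h : ∃ n : ℤ, q = ((n : ℚ) : WithTop ℚ) then h.choose else 0

/-- Extract the rational value (junk value `0` at `⊤`). -/
def qOf (q : WithTop ℚ) : ℚ := q.untopD 0

/-- Canonical map `WithTop ℤ → WithTop ℚ`. -/
def zq : WithTop ℤ → WithTop ℚ := WithTop.map fun n : ℤ => (n : ℚ)

/-- A finite extension `K` of `ℚ_[p]` inside the fixed algebraic closure, together with
the `ℚ ∪ {∞}`-valued additive valuation `w` on the algebraic closure which is the unique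
extension of the discrete valuation `v` of `K` normalized by `v(K^×) = ℤ`, and a fixed
uniformizer `π ∈ O`.  (The hypotheses pin `w` down uniquely: it is an additive valuation,
it is `ℤ`-valued and surjective onto `ℤ` on `K^×`, and it is proportional to the `p`-adic
valuation on `ℚ_[p]`.) -/
structure PadicCtx where
  K : IntermediateField ℚ_[p] (Om p)
  fd : FiniteDimensional ℚ_[p] K
  w : Om p → WithTop ℚ
  w_top : ∀ x, w x = ⊤ ↔ x = 0
  w_mul : ∀ x y, w (x * y) = w x + w y
  w_add : ∀ x y, min (w x) (w y) ≤ w (x + y)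
  w_Kint : ∀ x : K, x ≠ 0 → ∃ n : ℤ, w (x : Om p) = ((n : ℚ) : WithTop ℚ)
  w_Ksurj : ∀ n : ℤ, ∃ x : K, w (x : Om p) = ((n : ℚ) : WithTop ℚ)
  ePad : ℚ
  ePad_pos : 0 < ePad
  w_padic : ∀ x : ℚ_[p], x ≠ 0 →
    w (algebraMap ℚ_[p] (Om p) x) = (((x.valuation : ℚ) * ePad : ℚ) : WithTop ℚ)
  πO : Oring p K
  w_π : w ((πO : K) : Om p) = ((1 : ℚ) : WithTop ℚ)

namespace PadicCtx

variable {p} (C : PadicCtx p)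

/-! ### Basic facts about `w` needed to construct rings of integers -/

theorem w_zero : C.w 0 = ⊤ := (C.w_top 0).mpr rfl

theorem w_one : C.w 1 = 0 := by
  have h := C.w_mul 1 1
  rw [mul_one] at h
  have h1 : C.w 1 ≠ ⊤ := fun hh => one_ne_zero ((C.w_top 1).mp hh)
  rcases WithTop.ne_top_iff_exists.mp h1 with ⟨a, ha⟩
  rw [← ha] at h ⊢
  have : a = a + a := by exact_mod_cast h
  have : a = 0 := by linarith
  exact_mod_cast congrArg (fun x : ℚ => ((x : WithTop ℚ))) this

theorem w_negone : C.w (-1) = 0 := by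
  have h := C.w_mul (-1) (-1)
  rw [neg_mul_neg, one_mul, C.w_one] at h
  have h1 : C.w (-1) ≠ ⊤ := by
    intro hh
    have : (-1 : Om p) = 0 := (C.w_top (-1)).mp hh
    simpa using this
  rcases WithTop.ne_top_iff_exists.mp h1 with ⟨a, ha⟩
  rw [← ha] at h ⊢
  have h' : (0 : ℚ) = a + a := by exact_mod_cast h
  have : a = 0 := by linarith
  exact_mod_cast congrArg (fun x : ℚ => ((x : WithTop ℚ))) this

theorem w_neg (x : Om p) : C.w (-x) = C.w x := by
  have h := C.w_mul (-1) x
  rw [neg_one_mul, C.w_negone, zero_add] at h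
  exact h

/-! ### Rings of integers, maximal ideals, residue fields -/

/-- The ring of integers `O_L = {x ∈ L : w x ≥ 0}` of an intermediate field `L`. -/
def OL (L : IntermediateField ℚ_[p] (Om p)) : Subring (Om p) where
  carrier := {x | x ∈ L ∧ 0 ≤ C.w x}
  zero_mem' := ⟨zero_mem L, by rw [C.w_zero]; exact le_top⟩
  one_mem' := ⟨one_mem L, by rw [C.w_one]⟩
  add_mem' := fun {a b} ha hb =>
    ⟨add_mem ha.1 hb.1, le_trans (le_min ha.2 hb.2) (C.w_add a b)⟩
  mul_mem' := fun {a b} ha hb =>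
    ⟨mul_mem ha.1 hb.1, by rw [C.w_mul]; exact add_nonneg ha.2 hb.2⟩
  neg_mem' := fun {a} ha => ⟨neg_mem ha.1, by rw [C.w_neg]; exact ha.2⟩

theorem mem_OL {L : IntermediateField ℚ_[p] (Om p)} {x : Om p} :
    x ∈ C.OL L ↔ x ∈ L ∧ 0 ≤ C.w x := Iff.rfl

/-- The maximal ideal `m_L = {x ∈ O_L : w x > 0}` of the ring of integers of `L`. -/
def mOL (L : IntermediateField ℚ_[p] (Om p)) : Ideal ↥(C.OL L) where
  carrier := {x | 0 < C.w (x : Om p)}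
  zero_mem' := by
    show 0 < C.w ((0 : ↥(C.OL L)) : Om p)
    rw [show ((0 : ↥(C.OL L)) : Om p) = 0 from rfl, C.w_zero]
    exact lt_top_iff_ne_top.mpr (by simp)
  add_mem' := fun {a b} ha hb =>
    lt_of_lt_of_le (lt_min ha hb) (C.w_add _ _)
  smul_mem' := fun r x hx => by
    show 0 < C.w ((r * x : ↥(C.OL L)) : Om p)
    rw [show ((r * x : ↥(C.OL L)) : Om p) = (r : Om p) * (x : Om p) from rfl, C.w_mul]
    calc (0 : WithTop ℚ) < C.w (x : Om p) := hx
      _ ≤ C.w (r : Om p) + C.w (x : Om p) :=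
        le_add_of_nonneg_left ((C.mem_OL.mp r.2).2)

/-- The residue field `𝔽_L = O_L / m_L`. -/
abbrev resF (L : IntermediateField ℚ_[p] (Om p)) : Type _ := ↥(C.OL L) ⧸ C.mOL L

/-- Inclusion of rings of integers along an inclusion of fields. -/
def OLincl {L M : IntermediateField ℚ_[p] (Om p)} (hLM : L ≤ M) :
    ↥(C.OL L) →+* ↥(C.OL M) where
  toFun x := ⟨x, hLM (C.mem_OL.mp x.2).1, (C.mem_OL.mp x.2).2⟩
  map_one' := rfl
  map_mul' _ _ := rfl
  map_zero' := rfl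
  map_add' _ _ := rfl

/-- The induced map of residue fields. -/
def resMap {L M : IntermediateField ℚ_[p] (Om p)} (hLM : L ≤ M) :
    C.resF L →+* C.resF M :=
  Ideal.Quotient.lift (C.mOL L) ((Ideal.Quotient.mk (C.mOL M)).comp (C.OLincl hLM))
    (fun a ha => by
      simp only [RingHom.comp_apply]
      rw [Ideal.Quotient.eq_zero_iff_mem]
      exact ha)

/-- The residual degree `f(M/L) = [𝔽_M : 𝔽_L]`. -/
def resDeg {L M : IntermediateField ℚ_[p] (Om p)} (hLM : L ≤ M) : ℕ :=
  letI : Algebra (C.resF L) (C.resF M) := (C.resMap hLM).toAlgebra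
  Module.finrank (C.resF L) (C.resF M)

/-- The ramification index `e(M/K)` of `M` over the base field `K`: the least `n > 0`
such that `n • w(M^×) ⊆ ℤ` (recall `w(K^×) = ℤ`). -/
def ramE (M : IntermediateField ℚ_[p] (Om p)) : ℕ :=
  sInf {n | 0 < n ∧ ∀ x : Om p, x ∈ M → x ≠ 0 → ∃ k : ℤ, n • C.w x = ((k : ℚ) : WithTop ℚ)}

/-! ### Polynomials over the ring of integers; `φ`-adic developments -/

/-- Value of `w` on an element of the ring of integers of `K`. -/
def vO (x : ↥(Oring p C.K)) : WithTop ℚ := C.w (((x : C.K)) : Om p)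

/-- The Gauss valuation `v` of a polynomial: the minimum of the values of its
coefficients. -/
def vpol (g : Polynomial ↥(Oring p C.K)) : WithTop ℚ :=
  g.support.inf fun n => C.vO (g.coeff n)

/-- The `i`-th coefficient `a_i` of the `φ`-adic development `f = ∑ a_i φ^i`
(`deg a_i < deg φ`). -/
def phiCoeff (φ f : Polynomial ↥(Oring p C.K)) (i : ℕ) : Polynomial ↥(Oring p C.K) :=
  (f /ₘ (φ ^ i)) %ₘ φ

/-- The residue ring `𝔽 = O/(π)` (the residue field of `K`). -/
abbrev Fres : Type _ := ↥(Oring p C.K) ⧸ (Ideal.span {C.πO} : Ideal ↥(Oring p C.K))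

/-- Reduction of polynomials modulo the maximal ideal `𝔪 = (π)` of `O`. -/
def redO (g : Polynomial ↥(Oring p C.K)) : Polynomial C.Fres :=
  g.map (Ideal.Quotient.mk (Ideal.span {C.πO}))

/-- The residue ring `𝔽_φ = O[x]/(π, φ(x))` (a finite field when `φ` is monic with
irreducible reduction). -/
abbrev Fphi (φ : Polynomial ↥(Oring p C.K)) : Type _ :=
  Polynomial ↥(Oring p C.K) ⧸
    (Ideal.span {Polynomial.C C.πO, φ} : Ideal (Polynomial ↥(Oring p C.K)))

/-- `red : O[x] → 𝔽_φ`, extended to polynomials with coefficients in `K` that have a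
(necessarily unique) preimage in `O[x]` (junk value `0` otherwise). -/
def resK (φ : Polynomial ↥(Oring p C.K)) (g : Polynomial ↥C.K) : C.Fphi φ :=
  if h : ∃ g' : Polynomial ↥(Oring p C.K), g'.map (Oring p C.K).subtype = g then
    Ideal.Quotient.mk _ h.choose
  else 0

/-- `g/π^{v(g)} ∈ K[x]`, the normalized polynomial whose reduction gives residual
coefficients. -/
def liftDiv (g : Polynomial ↥(Oring p C.K)) : Polynomial ↥C.K :=
  (g.map (Oring p C.K).subtype) *
    Polynomial.C (((C.πO : C.K)) ^ (-(zOf (C.vpol g))))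

/-! ### Newton polygons: supporting-line data for the slope `λ = -h/e` -/

/-- The quantity `e·v(a_i) + h·i` attached to the point `(i, v(a_i))` of a family of
coefficients `a`. -/
def ptValF (a : ℕ → Polynomial ↥(Oring p C.K)) (h e i : ℕ) : WithTop ℚ :=
  e • C.vpol (a i) + ((h * i : ℕ) : WithTop ℚ)

/-- `min_i (e·v(a_i) + h·i)`: `e` times the ordinate at the origin of the supporting
line of slope `λ = -h/e` of the principal polygon of the points `(i, v(a_i))`. -/
def wvalF (a : ℕ → Polynomial ↥(Oring p C.K)) (n h e : ℕ) : WithTop ℚ :=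
  (Finset.range (n + 1)).inf fun i => C.ptValF a h e i

/-- Initial abscissa of the `λ`-component (`λ = -h/e`). -/
def sInitF (a : ℕ → Polynomial ↥(Oring p C.K)) (n h e : ℕ) : ℕ :=
  sInf {i | C.ptValF a h e i = C.wvalF a n h e}

/-- Final abscissa of the `λ`-component (`λ = -h/e`). -/
def sFinF (a : ℕ → Polynomial ↥(Oring p C.K)) (n h e : ℕ) : ℕ :=
  sSup {i | C.ptValF a h e i = C.wvalF a n h e}

/-- Residual coefficient `c_i` attached to the slope `λ = -h/e`: it is
`red(a_i/π^{v(a_i)})` if `(i, v(a_i))` lies on the supporting line of slope `λ`, and `0`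
otherwise. -/
def resCoeffF (φ : Polynomial ↥(Oring p C.K)) (a : ℕ → Polynomial ↥(Oring p C.K))
    (n h e i : ℕ) : C.Fphi φ :=
  if C.ptValF a h e i = C.wvalF a n h e then C.resK φ (C.liftDiv (a i)) else 0

/-- The residual polynomial `R_λ(y) = ∑_{j=0}^d c_{s+je} y^j` attached to the slope
`λ = -h/e`. -/
def resPolyF (φ : Polynomial ↥(Oring p C.K)) (a : ℕ → Polynomial ↥(Oring p C.K))
    (n h e : ℕ) : Polynomial (C.Fphi φ) :=
  ∑ j ∈ Finset.range ((C.sFinF a n h e - C.sInitF a n h e) / e + 1),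
    Polynomial.C (C.resCoeffF φ a n h e (C.sInitF a n h e + j * e)) * Polynomial.X ^ j

/-- `(i, v(a_i))` lies on (the finite part of) the principal polygon of the points
`(i, v(a_i))`, i.e. on the supporting line of some negative slope. -/
def onF (a : ℕ → Polynomial ↥(Oring p C.K)) (n i : ℕ) : Prop :=
  ∃ h e : ℕ, 0 < h ∧ 0 < e ∧ C.ptValF a h e i = C.wvalF a n h e

/-- Residual coefficient `c_i` of the principal polygon of the points `(i, v(a_i))`. -/
def cCoeffF (φ : Polynomial ↥(Oring p C.K)) (a : ℕ → Polynomial ↥(Oring p C.K))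
    (n i : ℕ) : C.Fphi φ :=
  if C.onF a n i then C.resK φ (C.liftDiv (a i)) else 0

/-! Specializations to the `φ`-adic development of a polynomial `f`. -/

def ptVal (φ f : Polynomial ↥(Oring p C.K)) (h e i : ℕ) : WithTop ℚ :=
  C.ptValF (C.phiCoeff φ f) h e i

def wval (φ f : Polynomial ↥(Oring p C.K)) (h e : ℕ) : WithTop ℚ :=
  C.wvalF (C.phiCoeff φ f) f.natDegree h e

def sInit (φ f : Polynomial ↥(Oring p C.K)) (h e : ℕ) : ℕ :=
  C.sInitF (C.phiCoeff φ f) f.natDegree h e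

def sFin (φ f : Polynomial ↥(Oring p C.K)) (h e : ℕ) : ℕ :=
  C.sFinF (C.phiCoeff φ f) f.natDegree h e

/-- The residual polynomial `R_λ(f) ∈ 𝔽_φ[y]` of `f` attached to `λ = -h/e`. -/
def resPoly (φ f : Polynomial ↥(Oring p C.K)) (h e : ℕ) : Polynomial (C.Fphi φ) :=
  C.resPolyF φ (C.phiCoeff φ f) f.natDegree h e

/-- Residual coefficient `c_i` of `N_φ⁻(f)`. -/
def cCoeff (φ f : Polynomial ↥(Oring p C.K)) (i : ℕ) : C.Fphi φ :=
  C.cCoeffF φ (C.phiCoeff φ f) f.natDegree i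

/-- `ord_φ(f)`: the length of the side of slope `-∞` of `N_φ⁻(f)`. -/
def ordPhi (φ f : Polynomial ↥(Oring p C.K)) : ℕ := sSup {k | φ ^ k ∣ f}

/-- `ω(f) = ord_{φ̄}(f̄)`: for monic `f`, the length of the principal polygon
`N_φ⁻(f)`. -/
def omga (φ f : Polynomial ↥(Oring p C.K)) : ℕ := sSup {k | (C.redO φ) ^ k ∣ C.redO f}

/-! ### Evaluation in the algebraic closure -/

/-- The canonical map `O → Ω`. -/
def toOm : ↥(Oring p C.K) →+* Om p :=
  (algebraMap ↥C.K (Om p)).comp (Oring p C.K).subtype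

/-- Evaluation of a polynomial with coefficients in `O` at a point of the algebraic
closure. -/
def evOm (g : Polynomial ↥(Oring p C.K)) (θ : Om p) : Om p := (g.map C.toOm).eval θ

/-- The image of the uniformizer in `Ω`. -/
def piOm : Om p := C.toOm C.πO

/-- `γ(θ) = φ(θ)^e/π^h`. -/
def gamOm (φ : Polynomial ↥(Oring p C.K)) (h e : ℕ) (θ : Om p) : Om p :=
  (C.evOm φ θ) ^ (e : ℤ) * C.piOm ^ (-(h : ℤ))

/-- The canonical value in `Ω` of (a lift of) the residual coefficient `c_i` of `P`:
`(a_i/π^{v(a_i)})(θ)` when `(i, v(a_i))` lies on the supporting line, `0` otherwise. -/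
def cOm (φ P : Polynomial ↥(Oring p C.K)) (h e i : ℕ) (θ : Om p) : Om p :=
  if C.ptVal φ P h e i = C.wval φ P h e then
    C.evOm (C.phiCoeff φ P i) θ * C.piOm ^ (-(zOf (C.vpol (C.phiCoeff φ P i))))
  else 0

/-- The canonical value in `Ω` of (the canonical lift of) `R_λ(P)(γ̄)`:
`∑_j c_{s+je}(θ) · γ(θ)^j`.  Its residue class in `𝔽_L` is `R_λ(P)(γ̄)`. -/
def Rom (φ P : Polynomial ↥(Oring p C.K)) (h e : ℕ) (θ : Om p) : Om p :=
  ∑ j ∈ Finset.range ((C.sFin φ P h e - C.sInit φ P h e) / e + 1),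
    C.cOm φ P h e (C.sInit φ P h e + j * e) θ * (C.gamOm φ h e θ) ^ j

/-- `P⁰(θ) = ∑_{(i,u_i) ∈ S_λ(P)} a_i(θ) φ(θ)^i`. -/
def P0om (φ P : Polynomial ↥(Oring p C.K)) (h e : ℕ) (θ : Om p) : Om p :=
  ∑ i ∈ Finset.range (P.natDegree + 1),
    if C.ptVal φ P h e i = C.wval φ P h e then
      C.evOm (C.phiCoeff φ P i) θ * (C.evOm φ θ) ^ i
    else 0

/-- The value `P^S(θ) = π^{-u'} φ(θ)^{-s'} P⁰(θ)` of the virtual factor of `P` attached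
to `λ = -h/e` at `θ`. -/
def PSom (φ P : Polynomial ↥(Oring p C.K)) (h e : ℕ) (θ : Om p) : Om p :=
  C.piOm ^ (-(zOf (C.vpol (C.phiCoeff φ P (C.sInit φ P h e))))) *
    (C.evOm φ θ) ^ (-(C.sInit φ P h e : ℤ)) * C.P0om φ P h e θ

/-- `H(P)`: the ordinate at the origin of the line of slope `λ = -h/e` containing
`S_λ(P)`. -/
def Hq (φ P : Polynomial ↥(Oring p C.K)) (h e : ℕ) : ℚ :=
  qOf (C.wval φ P h e) / e

/-! ### Resultants and indices -/

/-- `v(Res(P, Q)) = ∑_{P(α)=0} v(Q(α))` (sum over the roots of `P` in `Ω` with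
multiplicity). -/
def vRes (P Q : Polynomial ↥(Oring p C.K)) : WithTop ℚ :=
  ((P.map C.toOm).roots.map fun α => C.w (C.evOm Q α)).sum

/-- `u_i = v(a_i)`, ordinate of the `i`-th point of the `φ`-Newton polygon. -/
def uQ (φ f : Polynomial ↥(Oring p C.K)) (i : ℕ) : WithTop ℚ :=
  C.vpol (C.phiCoeff φ f i)

/-- The ordinate of the `φ`-Newton polygon (lower convex envelope of the points
`(i, u_i)`) at the integer abscissa `i`: the minimum over all segments joining two points
`(j, u_j)`, `(k, u_k)` with `j ≤ i ≤ k` of their value at `i`. -/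
def NyW (φ f : Polynomial ↥(Oring p C.K)) (i : ℕ) : WithTop ℚ :=
  ((Finset.range (i + 1)) ×ˢ (Finset.Icc i f.natDegree)).inf fun jk =>
    if jk.1 = jk.2 then C.uQ φ f i
    else
      ((C.uQ φ f jk.1).map fun a => (((jk.2 - i : ℕ) : ℚ) / ((jk.2 - jk.1 : ℕ) : ℚ)) * a) +
      ((C.uQ φ f jk.2).map fun a => (((i - jk.1 : ℕ) : ℚ) / ((jk.2 - jk.1 : ℕ) : ℚ)) * a)

/-- Rational value of the ordinate of the `φ`-Newton polygon at abscissa `i`. -/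
def NyQ (φ f : Polynomial ↥(Oring p C.K)) (i : ℕ) : ℚ := qOf (C.NyW φ f i)

/-- `ind(N_φ⁻(f))`: the index of the principal `φ`-polygon of `f`; the side of slope
`-∞` (of length `ord_φ(f)`) contributes its length times the total height of the finite
part, and the finite part contributes the number of lattice points below (or on) the
polygon, strictly above the horizontal line through its last point and strictly beyond
the vertical line through the initial point of the finite part. -/
def indNP (φ f : Polynomial ↥(Oring p C.K)) : ℚ :=
  (C.ordPhi φ f) * (C.NyQ φ f (C.ordPhi φ f) - C.NyQ φ f (C.omga φ f)) +
  ∑ i ∈ Finset.Ioo (C.ordPhi φ f) (C.omga φ f),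
    ((⌊C.NyQ φ f i - C.NyQ φ f (C.omga φ f)⌋ : ℤ) : ℚ)

/-- Length `E` of the `λ`-component of `N_φ⁻(P)` for `λ = -μ`, `μ ∈ ℚ_{>0}`. -/
def Elen (φ P : Polynomial ↥(Oring p C.K)) (μ : ℚ) : ℕ :=
  C.sFin φ P μ.num.toNat μ.den - C.sInit φ P μ.num.toNat μ.den

/-- Height `H` of the `λ`-component of `N_φ⁻(P)` for `λ = -μ`. -/
def Hht (φ P : Polynomial ↥(Oring p C.K)) (μ : ℚ) : ℚ := (C.Elen φ P μ : ℚ) * μ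

/-- Total height of the finite part of `N_φ⁻(P)`. -/
def Htot (φ P : Polynomial ↥(Oring p C.K)) : ℚ :=
  ∑ᶠ μ : ℚ, if 0 < μ then C.Hht φ P μ else 0

/-- `∑_{i,j} min{E_i H'_j, E'_j H_i}` over the sides of `N_φ⁻(P)` and `N_φ⁻(Q)`,
where a side of slope `-∞` (of length `ord_φ`) has infinite height, so that it
contributes its length times the total height of the finite part of the other
polygon. -/
def resP (φ P Q : Polynomial ↥(Oring p C.K)) : ℚ :=
  (C.ordPhi φ P) * C.Htot φ Q + (C.ordPhi φ Q) * C.Htot φ P +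
  ∑ᶠ μ : ℚ, ∑ᶠ μ' : ℚ,
    if 0 < μ ∧ 0 < μ' then
      min ((C.Elen φ P μ : ℚ) * C.Hht φ Q μ') ((C.Elen φ Q μ' : ℚ) * C.Hht φ P μ)
    else 0

/-- `ord_ψ(R_λ(P))`: the multiplicity of the monic irreducible `ψ ∈ 𝔽_φ[y]` in the
residual polynomial of `P` attached to `λ = -h/e`. -/
def omPsi (φ : Polynomial ↥(Oring p C.K)) (ψ : Polynomial (C.Fphi φ))
    (P : Polynomial ↥(Oring p C.K)) (h e : ℕ) : ℕ :=
  sSup {k | ψ ^ k ∣ C.resPoly φ P h e}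

/-- The subring `O[θ]` of `Ω` generated by the ring of integers of `K` and `θ`. -/
def Otheta (θ : Om p) : Subring (Om p) :=
  Subring.closure ((C.OL C.K : Set (Om p)) ∪ {θ})

/-- The quotient `O_L / O[θ]` (as additive groups); its cardinality is
`q^{ind(F)}` for the minimal polynomial `F` of `θ` over `K`. -/
def idxQuot (L : IntermediateField ℚ_[p] (Om p)) (θ : Om p) : Type _ :=
  ↥(C.OL L) ⧸
    (AddSubgroup.comap ((C.OL L).subtype.toAddMonoidHom) (C.Otheta θ).toAddSubgroup)

end PadicCtx


namespace PadicCtx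

variable {p : ℕ} [Fact p.Prime] (C : PadicCtx p)

theorem nsmul_coe (n : ℕ) (a : ℚ) :
    n • ((a : ℚ) : WithTop ℚ) = (((n : ℚ) * a : ℚ) : WithTop ℚ) := by
  induction n with
  | zero => simp
  | succ k ih =>
    rw [succ_nsmul, ih, ← WithTop.coe_add]
    congr 1
    push_cast
    ring

theorem nsmul_top {n : ℕ} (hn : n ≠ 0) : n • (⊤ : WithTop ℚ) = ⊤ := by
  cases n with
  | zero => exact absurd rfl hn
  | succ k => rw [succ_nsmul]; simp

theorem w_ne_top {x : Om p} (hx : x ≠ 0) : C.w x ≠ ⊤ := fun hh => hx ((C.w_top x).mp hh)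

theorem w_pow (x : Om p) (n : ℕ) : C.w (x ^ n) = n • C.w x := by
  induction n with
  | zero => simpa using C.w_one
  | succ k ih => rw [pow_succ, C.w_mul, ih, succ_nsmul]

theorem w_pow_coe {x : Om p} {a : ℚ} (hx : C.w x = ((a : ℚ) : WithTop ℚ)) (n : ℕ) :
    C.w (x ^ n) = (((n : ℚ) * a : ℚ) : WithTop ℚ) := by
  rw [C.w_pow, hx, nsmul_coe]

theorem w_inv {x : Om p} {a : ℚ} (hx : C.w x = ((a : ℚ) : WithTop ℚ)) :
    C.w x⁻¹ = ((-a : ℚ) : WithTop ℚ) := by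
  have hx0 : x ≠ 0 := by
    intro hh
    rw [hh, C.w_zero] at hx
    exact (WithTop.coe_ne_top hx.symm)
  have h := C.w_mul x x⁻¹
  rw [mul_inv_cancel₀ hx0, C.w_one, hx] at h
  have h1 : C.w x⁻¹ ≠ ⊤ := C.w_ne_top (inv_ne_zero hx0)
  rcases WithTop.ne_top_iff_exists.mp h1 with ⟨b, hb⟩
  rw [← hb] at h ⊢
  rw [← WithTop.coe_add] at h
  have : (0 : ℚ) = a + b := by exact_mod_cast h
  have hb' : b = -a := by linarith
  rw [hb']

theorem w_zpow {x : Om p} {a : ℚ} (hx : C.w x = ((a : ℚ) : WithTop ℚ)) (k : ℤ) :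
    C.w (x ^ k) = (((k : ℚ) * a : ℚ) : WithTop ℚ) := by
  cases k with
  | ofNat n => rw [Int.ofNat_eq_coe, zpow_natCast, C.w_pow_coe hx]; norm_num
  | negSucc n =>
    rw [zpow_negSucc, C.w_inv (C.w_pow_coe hx (n + 1))]
    congr 1
    push_cast
    ring

theorem w_sum_ge {ι : Type*} (s : Finset ι) (f : ι → Om p) (b : WithTop ℚ)
    (hb : ∀ i ∈ s, b ≤ C.w (f i)) : b ≤ C.w (∑ i ∈ s, f i) := by
  classical
  induction s using Finset.induction with
  | empty => rw [Finset.sum_empty, C.w_zero]; exact le_top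
  | insert _ _ hnotmem ih =>
    rename_i a s'
    rw [Finset.sum_insert hnotmem]
    refine le_trans (le_min (hb a (Finset.mem_insert_self a s')) ?_) (C.w_add _ _)
    exact ih fun i hi => hb i (Finset.mem_insert_of_mem hi)

theorem w_sum_gt {ι : Type*} (s : Finset ι) (f : ι → Om p) (b : WithTop ℚ)
    (hbt : b ≠ ⊤) (hb : ∀ i ∈ s, b < C.w (f i)) : b < C.w (∑ i ∈ s, f i) := by
  classical
  induction s using Finset.induction with
  | empty => rw [Finset.sum_empty, C.w_zero]; exact lt_top_iff_ne_top.mpr hbt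
  | insert _ _ hnotmem ih =>
    rename_i a s'
    rw [Finset.sum_insert hnotmem]
    refine lt_of_lt_of_le (lt_min (hb a (Finset.mem_insert_self a s')) ?_) (C.w_add _ _)
    exact ih fun i hi => hb i (Finset.mem_insert_of_mem hi)

theorem w_integral_nonneg {x : Om p} {n : ℕ} (hn : 1 ≤ n) (b : ℕ → Om p)
    (hb : ∀ i, 0 ≤ C.w (b i)) (hx : x ^ n + ∑ i ∈ Finset.range n, b i * x ^ i = 0) :
    0 ≤ C.w x := by
  by_contra hlt
  push_neg at hlt
  have hxne : x ≠ 0 := by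
    intro hh
    rw [hh, C.w_zero] at hlt
    exact (not_top_lt hlt)
  rcases WithTop.ne_top_iff_exists.mp (C.w_ne_top hxne) with ⟨a, ha⟩
  have ha0 : a < 0 := by
    rw [← ha] at hlt
    exact_mod_cast hlt
  have hxn : x ^ n = -∑ i ∈ Finset.range n, b i * x ^ i := eq_neg_of_add_eq_zero_left hx
  have h1 : ∀ i ∈ Finset.range n, ((((n : ℚ) - 1) * a : ℚ) : WithTop ℚ) ≤ C.w (b i * x ^ i) := by
    intro i hi
    rw [C.w_mul, C.w_pow_coe ha.symm]
    have hi' : i ≤ n - 1 := Nat.le_sub_one_of_lt (Finset.mem_range.mp hi)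
    have hq : (((n : ℚ) - 1) * a : ℚ) ≤ (i : ℚ) * a := by
      have : (i : ℚ) ≤ (n : ℚ) - 1 := by
        have : ((i : ℚ)) ≤ ((n - 1 : ℕ) : ℚ) := by exact_mod_cast hi'
        rwa [Nat.cast_sub hn, Nat.cast_one] at this
      nlinarith
    calc ((((n : ℚ) - 1) * a : ℚ) : WithTop ℚ) ≤ (((i : ℚ) * a : ℚ) : WithTop ℚ) := by
          exact_mod_cast hq
      _ ≤ C.w (b i) + (((i : ℚ) * a : ℚ) : WithTop ℚ) := le_add_of_nonneg_left (hb i)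
  have h2 := C.w_sum_ge _ _ _ h1
  rw [← C.w_neg, ← hxn, C.w_pow_coe ha.symm] at h2
  have h3 : ((n : ℚ) - 1) * a ≤ (n : ℚ) * a := by exact_mod_cast h2
  nlinarith

theorem w_monic_root_nonneg {R : Type*} [CommRing R] [Nontrivial R] (ψ : R →+* Om p)
    {q : Polynomial R} (hq : q.Monic) {X : Om p} (h0 : Polynomial.eval₂ ψ X q = 0)
    (hc : ∀ c : R, 0 ≤ C.w (ψ c)) : 0 ≤ C.w X := by
  set n := q.natDegree with hn
  have hn1 : 1 ≤ n := by
    by_contra hcon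
    push_neg at hcon
    interval_cases n
    · have hq1 : q = 1 := hq.natDegree_eq_zero.mp hn.symm
      rw [hq1, Polynomial.eval₂_one] at h0
      exact one_ne_zero h0
  have hsum : Polynomial.eval₂ ψ X q =
      ∑ i ∈ Finset.range (n + 1), ψ (q.coeff i) * X ^ i :=
    Polynomial.eval₂_eq_sum_range ψ X
  rw [Finset.sum_range_succ] at hsum
  have hlead : q.coeff n = 1 := hq
  rw [hlead, map_one, one_mul] at hsum
  refine C.w_integral_nonneg hn1 (fun i => ψ (q.coeff i)) (fun i => hc _) ?_
  rw [add_comm, ← hsum, h0]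

end PadicCtx


namespace PadicCtx

variable {p : ℕ} [Fact p.Prime] (C : PadicCtx p)

theorem vO_zero : C.vO 0 = ⊤ := by
  show C.w _ = ⊤
  rw [ZeroMemClass.coe_zero, ZeroMemClass.coe_zero, C.w_zero]

theorem vO_ne_top {x : ↥(Oring p C.K)} (hx : x ≠ 0) : C.vO x ≠ ⊤ := by
  have h1 : (x : ↥C.K) ≠ 0 := fun hh => hx (Subtype.coe_injective hh)
  have h2 : ((x : ↥C.K) : Om p) ≠ 0 := fun hh => h1 (Subtype.coe_injective hh)
  exact C.w_ne_top h2

theorem w_toOm (x : ↥(Oring p C.K)) : C.w (C.toOm x) = C.vO x := by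
  show C.w ((algebraMap ↥C.K (Om p)) ((x : ↥C.K))) = C.w _
  rw [IntermediateField.algebraMap_apply]

theorem vO_nonneg (x : ↥(Oring p C.K)) : 0 ≤ C.vO x := by
  letI : Algebra ℤ_[p] ↥C.K :=
    ((algebraMap ℚ_[p] ↥C.K).comp (PadicInt.Coe.ringHom)).toAlgebra
  have hmem : IsIntegral ℤ_[p] (x : ↥C.K) := x.2
  obtain ⟨q, hqm, hqe⟩ := hmem
  have hq2 : Polynomial.eval₂ ((algebraMap ↥C.K (Om p)).comp (algebraMap ℤ_[p] ↥C.K))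
      ((algebraMap ↥C.K (Om p)) (x : ↥C.K)) q = 0 := by
    rw [← Polynomial.hom_eval₂, hqe, map_zero]
  have hcomp : ∀ c : ℤ_[p],
      ((algebraMap ↥C.K (Om p)).comp (algebraMap ℤ_[p] ↥C.K)) c =
        algebraMap ℚ_[p] (Om p) (c : ℚ_[p]) := by
    intro c
    show (algebraMap ↥C.K (Om p)) ((algebraMap ℚ_[p] ↥C.K) (c : ℚ_[p])) = _
    rw [← IsScalarTower.algebraMap_apply]
  have hval : 0 ≤ C.w ((algebraMap ↥C.K (Om p)) (x : ↥C.K)) := by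
    refine C.w_monic_root_nonneg _ hqm hq2 ?_
    intro c
    rw [hcomp]
    by_cases hc : (c : ℚ_[p]) = 0
    · rw [hc, map_zero, C.w_zero]; exact le_top
    · rw [C.w_padic _ hc]
      have h1 : 0 ≤ ((c : ℚ_[p]).valuation : ℚ) := by
        exact_mod_cast PadicInt.valuation_coe_nonneg (x := c)
      have : (0 : ℚ) ≤ ((c : ℚ_[p]).valuation : ℚ) * C.ePad :=
        mul_nonneg h1 (le_of_lt C.ePad_pos)
      exact_mod_cast this
  rw [← C.w_toOm]
  exact hval

theorem evOm_def (g : Polynomial ↥(Oring p C.K)) (θ : Om p) :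
    C.evOm g θ = Polynomial.eval₂ C.toOm θ g := by
  rw [evOm, Polynomial.eval_map]

theorem evOm_mul (g₁ g₂ : Polynomial ↥(Oring p C.K)) (θ : Om p) :
    C.evOm (g₁ * g₂) θ = C.evOm g₁ θ * C.evOm g₂ θ := by
  simp [evOm_def, Polynomial.eval₂_mul]

theorem evOm_one (θ : Om p) : C.evOm 1 θ = 1 := by
  simp [evOm_def]

theorem evOm_zero (θ : Om p) : C.evOm 0 θ = 0 := by
  simp [evOm_def]

theorem evOm_pow (g : Polynomial ↥(Oring p C.K)) (k : ℕ) (θ : Om p) :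
    C.evOm (g ^ k) θ = (C.evOm g θ) ^ k := by
  simp [evOm_def, Polynomial.eval₂_pow]

theorem evOm_sum {ι : Type*} (s : Finset ι) (F : ι → Polynomial ↥(Oring p C.K)) (θ : Om p) :
    C.evOm (∑ i ∈ s, F i) θ = ∑ i ∈ s, C.evOm (F i) θ := by
  simp [evOm_def, Polynomial.eval₂_finset_sum]

theorem w_root_nonneg {g : Polynomial ↥(Oring p C.K)} (hm : g.Monic) {θ : Om p}
    (hroot : C.evOm g θ = 0) : 0 ≤ C.w θ := by
  refine C.w_monic_root_nonneg C.toOm hm ?_ ?_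
  · rw [← C.evOm_def]; exact hroot
  · intro c; rw [C.w_toOm]; exact C.vO_nonneg c

theorem vpol_le (g : Polynomial ↥(Oring p C.K)) (i : ℕ) : C.vpol g ≤ C.vO (g.coeff i) := by
  by_cases hi : i ∈ g.support
  · exact Finset.inf_le hi
  · rw [Polynomial.notMem_support_iff.mp hi, C.vO_zero]; exact le_top

theorem vpol_zero : C.vpol 0 = ⊤ := by
  simp [vpol]

theorem vpol_ne_top {g : Polynomial ↥(Oring p C.K)} (hg : g ≠ 0) : C.vpol g ≠ ⊤ := by
  obtain ⟨i, hi⟩ := (Polynomial.support_nonempty.mpr hg)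
  intro hcon
  have h1 : C.vpol g ≤ C.vO (g.coeff i) := C.vpol_le g i
  rw [hcon, top_le_iff] at h1
  exact C.vO_ne_top (Polynomial.mem_support_iff.mp hi) h1

theorem vpol_exists_int {g : Polynomial ↥(Oring p C.K)} (hg : g ≠ 0) :
    ∃ n : ℤ, C.vpol g = ((n : ℚ) : WithTop ℚ) := by
  obtain ⟨i, hi, hinf⟩ := Finset.exists_mem_eq_inf g.support
    (Polynomial.support_nonempty.mpr hg) (fun n => C.vO (g.coeff n))
  have hci : (g.coeff i : ↥C.K) ≠ 0 := by
    intro hh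
    exact Polynomial.mem_support_iff.mp hi (Subtype.coe_injective hh)
  obtain ⟨n, hn⟩ := C.w_Kint _ hci
  exact ⟨n, by rw [vpol, hinf]; exact hn⟩

theorem w_evOm_ge {θ : Om p} (hθ : 0 ≤ C.w θ) (g : Polynomial ↥(Oring p C.K)) :
    C.vpol g ≤ C.w (C.evOm g θ) := by
  have hdeg : (g.map C.toOm).natDegree < g.natDegree + 1 :=
    Nat.lt_succ_of_le Polynomial.natDegree_map_le
  rw [evOm, Polynomial.eval_eq_sum_range' hdeg]
  refine C.w_sum_ge _ _ _ ?_
  intro i _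
  rw [Polynomial.coeff_map, C.w_mul, C.w_toOm, C.w_pow]
  calc C.vpol g ≤ C.vO (g.coeff i) := C.vpol_le g i
    _ = C.vO (g.coeff i) + 0 := (add_zero _).symm
    _ ≤ C.vO (g.coeff i) + i • C.w θ := add_le_add le_rfl (nsmul_nonneg hθ i)

theorem zOf_eq {q : WithTop ℚ} (hq : ∃ n : ℤ, q = ((n : ℚ) : WithTop ℚ)) :
    q = (((zOf q : ℤ) : ℚ) : WithTop ℚ) := by
  rw [zOf, dif_pos hq]
  exact hq.choose_spec

end PadicCtx


namespace PadicCtx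

variable {p : ℕ} [Fact p.Prime] (C : PadicCtx p)

theorem evOm_ne_zero_of_isUnit {g : Polynomial ↥(Oring p C.K)} (hg : IsUnit g) (θ : Om p) :
    C.evOm g θ ≠ 0 := by
  obtain ⟨g', hg'⟩ := isUnit_iff_exists_inv.mp hg
  intro h0
  have := congrArg (fun t => C.evOm t θ) hg'
  simp only [C.evOm_mul, C.evOm_one, h0, zero_mul] at this
  exact zero_ne_one this

theorem exists_irred_factor (θ' : Om p) :
    ∀ N : ℕ, ∀ g : Polynomial ↥(Oring p C.K), g.natDegree ≤ N → g.Monic →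
      C.evOm g θ' = 0 →
      ∃ F, F.Monic ∧ Irreducible F ∧ F ∣ g ∧ C.evOm F θ' = 0 := by
  intro N
  induction N with
  | zero =>
    intro g hdeg hm h0
    exfalso
    have hg1 : g = 1 := hm.natDegree_eq_zero.mp (Nat.le_zero.mp hdeg)
    rw [hg1, C.evOm_one] at h0
    exact one_ne_zero h0
  | succ N ih =>
    intro g hdeg hm h0
    by_cases hirr : Irreducible g
    · exact ⟨g, hm, hirr, dvd_rfl, h0⟩
    have hnu : ¬IsUnit g := fun hu => C.evOm_ne_zero_of_isUnit hu θ' h0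
    rw [irreducible_iff] at hirr
    push_neg at hirr
    obtain ⟨a, b, hab, ha, hb⟩ := hirr hnu
    have hane : a ≠ 0 := by rintro rfl; rw [zero_mul] at hab; exact hm.ne_zero hab
    have hbne : b ≠ 0 := by rintro rfl; rw [mul_zero] at hab; exact hm.ne_zero hab
    have hlc : a.leadingCoeff * b.leadingCoeff = 1 := by
      rw [← Polynomial.leadingCoeff_mul, ← hab]; exact hm
    set a' := Polynomial.C b.leadingCoeff * a with ha'
    set b' := Polynomial.C a.leadingCoeff * b with hb'
    have hab' : a' * b' = g := by
      rw [ha', hb', hab]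
      rw [show Polynomial.C b.leadingCoeff * a * (Polynomial.C a.leadingCoeff * b)
        = Polynomial.C (a.leadingCoeff * b.leadingCoeff) * (a * b) by
          rw [Polynomial.C_mul]; ring]
      rw [hlc, map_one, one_mul]
    have ha'm : a'.Monic := by
      show a'.leadingCoeff = 1
      rw [ha', Polynomial.leadingCoeff_mul, Polynomial.leadingCoeff_C, mul_comm]
      exact hlc
    have hb'm : b'.Monic := by
      show b'.leadingCoeff = 1
      rw [hb', Polynomial.leadingCoeff_mul, Polynomial.leadingCoeff_C]
      exact hlc
    have hua : IsUnit (Polynomial.C a.leadingCoeff) :=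
      Polynomial.isUnit_C.mpr (IsUnit.of_mul_eq_one _ hlc)
    have hub : IsUnit (Polynomial.C b.leadingCoeff) :=
      Polynomial.isUnit_C.mpr (IsUnit.of_mul_eq_one _ (by rwa [mul_comm] at hlc))
    have ha'nu : ¬IsUnit a' := by
      intro hu
      exact ha (by rw [ha'] at hu; exact (isUnit_of_mul_isUnit_right hu))
    have hb'nu : ¬IsUnit b' := by
      intro hu
      exact hb (by rw [hb'] at hu; exact (isUnit_of_mul_isUnit_right hu))
    have hda : 1 ≤ a'.natDegree := by
      by_contra hcon
      push_neg at hcon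
      exact ha'nu (by rw [ha'm.natDegree_eq_zero.mp (by omega)]; exact isUnit_one)
    have hdb : 1 ≤ b'.natDegree := by
      by_contra hcon
      push_neg at hcon
      exact hb'nu (by rw [hb'm.natDegree_eq_zero.mp (by omega)]; exact isUnit_one)
    have hdsum : a'.natDegree + b'.natDegree = g.natDegree := by
      rw [← hab', Polynomial.natDegree_mul ha'm.ne_zero hb'm.ne_zero]
    have h0' : C.evOm a' θ' * C.evOm b' θ' = 0 := by rw [← C.evOm_mul, hab']; exact h0
    rcases mul_eq_zero.mp h0' with hz | hz
    · obtain ⟨F, h1, h2, h3, h4⟩ := ih a' (by omega) ha'm hz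
      exact ⟨F, h1, h2, h3.trans ⟨b', hab'.symm⟩, h4⟩
    · obtain ⟨F, h1, h2, h3, h4⟩ := ih b' (by omega) hb'm hz
      exact ⟨F, h1, h2, h3.trans ⟨a', by rw [← hab', mul_comm]⟩, h4⟩

theorem divByMonic_pow_succ {φ : Polynomial ↥(Oring p C.K)} (hφ : φ.Monic)
    (hdeg : 1 ≤ φ.natDegree) (P : Polynomial ↥(Oring p C.K)) (k : ℕ) :
    P /ₘ φ ^ (k + 1) = (P /ₘ φ ^ k) /ₘ φ := by
  have hdegpow : ∀ j : ℕ, (φ ^ j).degree = ((j * φ.natDegree : ℕ) : WithBot ℕ) := by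
    intro j
    rw [Polynomial.degree_eq_natDegree (hφ.pow j).ne_zero, hφ.natDegree_pow]
  refine (Polynomial.div_modByMonic_unique _
    (P %ₘ φ ^ k + φ ^ k * ((P /ₘ φ ^ k) %ₘ φ)) (hφ.pow _) ⟨?_, ?_⟩).1
  · have h1 := Polynomial.modByMonic_add_div P (φ ^ k)
    have h2 := Polynomial.modByMonic_add_div (P /ₘ φ ^ k) φ
    calc P %ₘ φ ^ k + φ ^ k * ((P /ₘ φ ^ k) %ₘ φ) + φ ^ (k + 1) * ((P /ₘ φ ^ k) /ₘ φ)
        = P %ₘ φ ^ k + φ ^ k * ((P /ₘ φ ^ k) %ₘ φ + φ * ((P /ₘ φ ^ k) /ₘ φ)) := by ring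
      _ = P := by rw [h2, h1]
  · refine lt_of_le_of_lt (Polynomial.degree_add_le _ _) (max_lt ?_ ?_)
    · refine lt_of_lt_of_le (Polynomial.degree_modByMonic_lt P (hφ.pow k)) ?_
      rw [hdegpow k, hdegpow (k + 1)]
      exact_mod_cast Nat.mul_le_mul_right _ (Nat.le_succ k)
    · by_cases hs : (P /ₘ φ ^ k) %ₘ φ = 0
      · rw [hs, mul_zero, Polynomial.degree_zero, hdegpow (k + 1)]
        exact WithBot.bot_lt_coe _
      · rw [Polynomial.degree_mul, pow_succ, Polynomial.degree_mul]
        have hlt : ((P /ₘ φ ^ k) %ₘ φ).degree < φ.degree :=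
          Polynomial.degree_modByMonic_lt _ hφ
        refine WithBot.add_lt_add_left ?_ hlt
        rw [hdegpow k]
        exact WithBot.coe_ne_bot

theorem phiCoeff_sum {φ : Polynomial ↥(Oring p C.K)} (hφ : φ.Monic)
    (hdeg : 1 ≤ φ.natDegree) (P : Polynomial ↥(Oring p C.K)) (k : ℕ) :
    (∑ i ∈ Finset.range k, C.phiCoeff φ P i * φ ^ i) + P /ₘ φ ^ k * φ ^ k = P := by
  induction k with
  | zero => simp [Polynomial.divByMonic_one]
  | succ k ih =>
    rw [Finset.sum_range_succ]
    have hstep : P /ₘ φ ^ (k + 1) = (P /ₘ φ ^ k) /ₘ φ := C.divByMonic_pow_succ hφ hdeg P k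
    rw [hstep]
    have h2 := Polynomial.modByMonic_add_div (P /ₘ φ ^ k) φ
    have hc : C.phiCoeff φ P k = (P /ₘ φ ^ k) %ₘ φ := rfl
    rw [hc, pow_succ]
    linear_combination (φ ^ k) * h2 + ih

theorem phiCoeff_self_sum {φ : Polynomial ↥(Oring p C.K)} (hφ : φ.Monic)
    (hdeg : 1 ≤ φ.natDegree) (P : Polynomial ↥(Oring p C.K)) :
    P = ∑ i ∈ Finset.range (P.natDegree + 1), C.phiCoeff φ P i * φ ^ i := by
  have h := C.phiCoeff_sum hφ hdeg P (P.natDegree + 1)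
  have hz : P /ₘ φ ^ (P.natDegree + 1) = 0 := by
    rw [Polynomial.divByMonic_eq_zero_iff (hφ.pow _)]
    refine lt_of_le_of_lt (Polynomial.degree_le_natDegree) ?_
    rw [Polynomial.degree_eq_natDegree (hφ.pow _).ne_zero, hφ.natDegree_pow]
    exact_mod_cast Nat.lt_of_lt_of_le (Nat.lt_succ_self _) (Nat.le_mul_of_pos_right _ hdeg)
  rw [hz, zero_mul, add_zero] at h
  exact h.symm

theorem phiCoeff_eq_zero {φ : Polynomial ↥(Oring p C.K)} (hφ : φ.Monic)
    (hdeg : 1 ≤ φ.natDegree) {P : Polynomial ↥(Oring p C.K)} {i : ℕ}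
    (hi : P.natDegree < i) : C.phiCoeff φ P i = 0 := by
  have hz : P /ₘ φ ^ i = 0 := by
    rw [Polynomial.divByMonic_eq_zero_iff (hφ.pow _)]
    refine lt_of_le_of_lt (Polynomial.degree_le_natDegree) ?_
    rw [Polynomial.degree_eq_natDegree (hφ.pow _).ne_zero, hφ.natDegree_pow]
    exact_mod_cast Nat.lt_of_lt_of_le hi (Nat.le_mul_of_pos_right _ hdeg)
  rw [phiCoeff, hz, Polynomial.zero_modByMonic]

theorem phi_natDegree_pos {φ : Polynomial ↥(Oring p C.K)} (hφ : φ.Monic)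
    (hirr : Irreducible (C.redO φ)) : 1 ≤ φ.natDegree := by
  by_contra hcon
  push_neg at hcon
  have hφ1 : φ = 1 := hφ.natDegree_eq_zero.mp (by omega)
  rw [hφ1] at hirr
  have : C.redO (1 : Polynomial ↥(Oring p C.K)) = 1 := by
    simp [redO]
  rw [this] at hirr
  exact not_irreducible_one hirr

end PadicCtx


namespace PadicCtx

variable {p : ℕ} [Fact p.Prime]

theorem key (C : PadicCtx p) (φ : Polynomial ↥(Oring p C.K)) (hφm : φ.Monic)
    (hm1 : 1 ≤ φ.natDegree) (h e : ℕ) (hh : 0 < h) (he : 0 < e)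
    (hcop : Nat.Coprime h e) (θ : Om p) (hθ0 : 0 ≤ C.w θ)
    (hwφ : C.w (C.evOm φ θ) = (((h : ℚ) / (e : ℚ) : ℚ) : WithTop ℚ))
    (P : Polynomial ↥(Oring p C.K)) (hP : P ≠ 0) :
    0 ≤ C.w (C.PSom φ P h e θ) ∧
      0 < C.w (C.PSom φ P h e θ - C.Rom φ P h e θ) ∧
      ((C.Hq φ P h e : ℚ) : WithTop ℚ) < C.w (C.evOm P θ - C.P0om φ P h e θ) := by
  have hφθ_ne : C.evOm φ θ ≠ 0 := by
    intro hz
    rw [hz, C.w_zero] at hwφ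
    exact WithTop.coe_ne_top hwφ.symm
  have hwπ : C.w C.piOm = ((1 : ℚ) : WithTop ℚ) := by
    rw [piOm, C.w_toOm]; exact C.w_π
  have hπ_ne : C.piOm ≠ 0 := by
    intro hz
    rw [hz, C.w_zero] at hwπ
    exact WithTop.coe_ne_top hwπ.symm
  have he' : ((e : ℚ)) ≠ 0 := Nat.cast_ne_zero.mpr he.ne'
  have hepos : (0 : ℚ) < (e : ℚ) := by exact_mod_cast he
  set U : ℕ → ℤ := fun i => zOf (C.vpol (C.phiCoeff φ P i)) with hUdef
  have hcastN : ∀ m : ℕ, ((m : ℕ) : WithTop ℚ) = (((m : ℚ)) : WithTop ℚ) := fun m =>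
    (WithTop.coe_natCast m).symm
  have hvA : ∀ i, C.phiCoeff φ P i ≠ 0 →
      C.vpol (C.phiCoeff φ P i) = (((U i : ℤ) : ℚ) : WithTop ℚ) := fun i hi =>
    zOf_eq (C.vpol_exists_int hi)
  have hpt : ∀ i, C.ptVal φ P h e i
      = e • C.vpol (C.phiCoeff φ P i) + ((((h * i : ℕ) : ℚ)) : WithTop ℚ) := by
    intro i
    rw [ptVal, ptValF, hcastN]
  have hptc : ∀ i, C.phiCoeff φ P i ≠ 0 →
      C.ptVal φ P h e i = ((((e : ℚ) * (U i : ℚ) + (h : ℚ) * (i : ℚ) : ℚ)) : WithTop ℚ) := by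
    intro i hi
    rw [hpt i, hvA i hi, nsmul_coe, ← WithTop.coe_add]
    congr 1
    push_cast
    ring
  have hptt : ∀ i, C.phiCoeff φ P i = 0 → C.ptVal φ P h e i = ⊤ := by
    intro i hi
    rw [hpt i, hi, C.vpol_zero, nsmul_top he.ne', top_add]
  have hAzero : ∀ i, P.natDegree < i → C.phiCoeff φ P i = 0 := fun i hi =>
    C.phiCoeff_eq_zero hφm hm1 hi
  have hWne : C.wval φ P h e ≠ ⊤ := by
    have hex : ∃ i, i ∈ Finset.range (P.natDegree + 1) ∧ C.phiCoeff φ P i ≠ 0 := by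
      by_contra hcon
      push_neg at hcon
      apply hP
      rw [C.phiCoeff_self_sum hφm hm1 P]
      exact Finset.sum_eq_zero fun i hi => by rw [hcon i hi, zero_mul]
    obtain ⟨i0, hi0r, hi0⟩ := hex
    have h1 : C.wval φ P h e ≤ C.ptVal φ P h e i0 := Finset.inf_le hi0r
    rw [hptc i0 hi0] at h1
    intro hcon
    rw [hcon] at h1
    exact WithTop.coe_ne_top (top_le_iff.mp h1)
  have hSA : ∀ i, C.ptVal φ P h e i = C.wval φ P h e → C.phiCoeff φ P i ≠ 0 := by
    intro i hi hz
    exact hWne (hi ▸ hptt i hz)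
  have hSn : ∀ i, C.ptVal φ P h e i = C.wval φ P h e → i ≤ P.natDegree := by
    intro i hi
    by_contra hc
    push_neg at hc
    exact hSA i hi (hAzero i hc)
  have hSbdd : BddAbove {i | C.ptVal φ P h e i = C.wval φ P h e} :=
    ⟨P.natDegree, fun i hi => hSn i hi⟩
  have hSne : {i | C.ptVal φ P h e i = C.wval φ P h e}.Nonempty := by
    obtain ⟨i, hi, heq⟩ := Finset.exists_mem_eq_inf (Finset.range (P.natDegree + 1))
      ⟨0, Finset.mem_range.mpr (Nat.succ_pos _)⟩ (fun i => C.ptValF (C.phiCoeff φ P) h e i)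
    exact ⟨i, heq.symm⟩
  have hs0mem : C.ptVal φ P h e (C.sInit φ P h e) = C.wval φ P h e := Nat.sInf_mem hSne
  have hs0le : ∀ i, C.ptVal φ P h e i = C.wval φ P h e → C.sInit φ P h e ≤ i := fun i hi =>
    Nat.sInf_le hi
  have ht0ge : ∀ i, C.ptVal φ P h e i = C.wval φ P h e → i ≤ C.sFin φ P h e := fun i hi =>
    le_csSup hSbdd hi
  have hline : ∀ i, C.ptVal φ P h e i = C.wval φ P h e →
      (e : ℤ) * U i + (h : ℤ) * (i : ℤ)
        = (e : ℤ) * U (C.sInit φ P h e) + (h : ℤ) * ((C.sInit φ P h e : ℕ) : ℤ) := by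
    intro i hi
    have h1 : C.ptVal φ P h e i = C.ptVal φ P h e (C.sInit φ P h e) := hi.trans hs0mem.symm
    rw [hptc i (hSA i hi), hptc _ (hSA _ hs0mem)] at h1
    have h2 : (e : ℚ) * (U i : ℚ) + (h : ℚ) * (i : ℚ)
        = (e : ℚ) * (U (C.sInit φ P h e) : ℚ) + (h : ℚ) * ((C.sInit φ P h e : ℕ) : ℚ) :=
      WithTop.coe_inj.mp h1
    exact_mod_cast h2
  have hqW : C.wval φ P h e
      = ((((e : ℚ) * (U (C.sInit φ P h e) : ℚ)
          + (h : ℚ) * ((C.sInit φ P h e : ℕ) : ℚ) : ℚ)) : WithTop ℚ) := by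
    rw [← hs0mem, hptc _ (hSA _ hs0mem)]
  have hHq : C.Hq φ P h e = ((e : ℚ) * (U (C.sInit φ P h e) : ℚ)
      + (h : ℚ) * ((C.sInit φ P h e : ℕ) : ℚ)) / (e : ℚ) := by
    rw [Hq, hqW]
    simp only [qOf, WithTop.untopD_coe]
  have hHi : ∀ i, C.ptVal φ P h e i = C.wval φ P h e →
      (U i : ℚ) + (i : ℚ) * ((h : ℚ) / (e : ℚ)) = C.Hq φ P h e := by
    intro i hi
    have hlq : (e : ℚ) * (U i : ℚ) + (h : ℚ) * (i : ℚ)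
        = (e : ℚ) * (U (C.sInit φ P h e) : ℚ) + (h : ℚ) * ((C.sInit φ P h e : ℕ) : ℚ) := by
      exact_mod_cast hline i hi
    rw [hHq]
    field_simp
    linarith
  have hwt : ∀ i, C.phiCoeff φ P i ≠ 0 →
      ((((U i : ℚ) + (i : ℚ) * ((h : ℚ) / (e : ℚ)) : ℚ)) : WithTop ℚ)
        ≤ C.w (C.evOm (C.phiCoeff φ P i) θ * (C.evOm φ θ) ^ i) := by
    intro i hi
    rw [C.w_mul, C.w_pow_coe hwφ]
    have h1 : (((U i : ℚ)) : WithTop ℚ) ≤ C.w (C.evOm (C.phiCoeff φ P i) θ) := by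
      rw [← hvA i hi]
      exact C.w_evOm_ge hθ0 (C.phiCoeff φ P i)
    calc ((((U i : ℚ) + (i : ℚ) * ((h : ℚ) / (e : ℚ)) : ℚ)) : WithTop ℚ)
        = (((U i : ℚ)) : WithTop ℚ)
            + ((((i : ℚ) * ((h : ℚ) / (e : ℚ)) : ℚ)) : WithTop ℚ) := by
          rw [← WithTop.coe_add]
      _ ≤ C.w (C.evOm (C.phiCoeff φ P i) θ)
            + ((((i : ℚ) * ((h : ℚ) / (e : ℚ)) : ℚ)) : WithTop ℚ) := add_le_add h1 le_rfl
  have hterm : ∀ i, C.ptVal φ P h e i = C.wval φ P h e →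
      ((C.Hq φ P h e : ℚ) : WithTop ℚ)
        ≤ C.w (C.evOm (C.phiCoeff φ P i) θ * (C.evOm φ θ) ^ i) := by
    intro i hi
    rw [← hHi i hi]
    exact hwt i (hSA i hi)
  have hP0 : ((C.Hq φ P h e : ℚ) : WithTop ℚ) ≤ C.w (C.P0om φ P h e θ) := by
    rw [P0om]
    refine C.w_sum_ge _ _ _ ?_
    intro i _
    by_cases hiS : C.ptVal φ P h e i = C.wval φ P h e
    · rw [if_pos hiS]
      exact hterm i hiS
    · rw [if_neg hiS, C.w_zero]
      exact le_top
  -- Claim 1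
  have hc1 : 0 ≤ C.w (C.PSom φ P h e θ) := by
    have hUs : zOf (C.vpol (C.phiCoeff φ P (C.sInit φ P h e))) = U (C.sInit φ P h e) := rfl
    rw [PSom, C.w_mul, C.w_mul, hUs, C.w_zpow hwπ, C.w_zpow hwφ]
    have hkey : (((-(U (C.sInit φ P h e)) : ℤ) : ℚ)) * 1
        + (((-(C.sInit φ P h e : ℕ) : ℤ) : ℚ)) * ((h : ℚ) / (e : ℚ)) + C.Hq φ P h e = 0 := by
      rw [← hHi _ hs0mem]
      push_cast
      ring
    calc (0 : WithTop ℚ)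
        = (((((-(U (C.sInit φ P h e)) : ℤ) : ℚ)) * 1
            + (((-(C.sInit φ P h e : ℕ) : ℤ) : ℚ)) * ((h : ℚ) / (e : ℚ))
            + C.Hq φ P h e : ℚ) : WithTop ℚ) := by rw [hkey, WithTop.coe_zero]
      _ = (((((-(U (C.sInit φ P h e)) : ℤ) : ℚ)) * 1 : ℚ) : WithTop ℚ)
            + (((((-(C.sInit φ P h e : ℕ) : ℤ) : ℚ)) * ((h : ℚ) / (e : ℚ)) : ℚ) : WithTop ℚ)
            + ((C.Hq φ P h e : ℚ) : WithTop ℚ) := by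
          rw [← WithTop.coe_add, ← WithTop.coe_add]
      _ ≤ (((((-(U (C.sInit φ P h e)) : ℤ) : ℚ)) * 1 : ℚ) : WithTop ℚ)
            + (((((-(C.sInit φ P h e : ℕ) : ℤ) : ℚ)) * ((h : ℚ) / (e : ℚ)) : ℚ) : WithTop ℚ)
            + C.w (C.P0om φ P h e θ) := add_le_add le_rfl hP0
  -- divisibility facts for the bijection
  have hdvde : ∀ i, C.ptVal φ P h e i = C.wval φ P h e → e ∣ (i - C.sInit φ P h e) := by
    intro i hi
    have hle : C.sInit φ P h e ≤ i := hs0le i hi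
    have hcast : ((i - C.sInit φ P h e : ℕ) : ℤ) = (i : ℤ) - ((C.sInit φ P h e : ℕ) : ℤ) :=
      Int.ofNat_sub hle
    have hz : ((i - C.sInit φ P h e : ℕ) : ℤ) * (h : ℤ)
        = (e : ℤ) * (U (C.sInit φ P h e) - U i) := by
      rw [hcast]
      have := hline i hi
      ring_nf
      ring_nf at this
      linarith
    have hdz : (e : ℤ) ∣ ((i - C.sInit φ P h e : ℕ) : ℤ) * (h : ℤ) := ⟨_, hz⟩
    have hdn : e ∣ (i - C.sInit φ P h e) * h := by exact_mod_cast hdz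
    exact Nat.Coprime.dvd_of_dvd_mul_right hcop.symm hdn
  have hback : ∀ i, C.ptVal φ P h e i = C.wval φ P h e →
      C.sInit φ P h e + (i - C.sInit φ P h e) / e * e = i := by
    intro i hi
    rw [Nat.div_mul_cancel (hdvde i hi), Nat.add_sub_cancel' (hs0le i hi)]
  -- the exact algebraic identity between the summands of `PSom` and those of `Rom`
  have hval : ∀ (i j : ℕ), C.ptVal φ P h e i = C.wval φ P h e → i = C.sInit φ P h e + j * e →
      C.piOm ^ (-(U (C.sInit φ P h e))) * (C.evOm φ θ) ^ (-(C.sInit φ P h e : ℤ))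
          * (C.evOm (C.phiCoeff φ P i) θ * (C.evOm φ θ) ^ i)
        = C.evOm (C.phiCoeff φ P i) θ * C.piOm ^ (-(U i)) * (C.gamOm φ h e θ) ^ j := by
    intro i j hQi hij
    have hiz : (i : ℤ) = ((C.sInit φ P h e : ℕ) : ℤ) + (j : ℤ) * (e : ℤ) := by
      exact_mod_cast congrArg (Nat.cast : ℕ → ℤ) hij
    have he0 : (e : ℤ) ≠ 0 := by exact_mod_cast he.ne'
    have hUs : U (C.sInit φ P h e) = U i + (h : ℤ) * (j : ℤ) := by
      have hl := hline i hQi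
      rw [hiz] at hl
      have h2 : (e : ℤ) * (U i + (h : ℤ) * (j : ℤ)) = (e : ℤ) * U (C.sInit φ P h e) := by
        ring_nf
        ring_nf at hl
        linarith
      exact (mul_left_cancel₀ he0 h2).symm
    have hexp1 : -(U (C.sInit φ P h e)) = -(U i) + (-(h : ℤ)) * (j : ℤ) := by
      rw [hUs]; ring
    have hexp2 : (e : ℤ) * (j : ℤ) = (-(C.sInit φ P h e : ℤ)) + (i : ℤ) := by
      rw [hiz]; ring
    rw [gamOm]
    rw [show ((C.evOm φ θ) ^ (e : ℤ) * C.piOm ^ (-(h : ℤ))) ^ j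
        = (C.evOm φ θ) ^ ((e : ℤ) * (j : ℤ)) * C.piOm ^ ((-(h : ℤ)) * (j : ℤ)) by
      rw [mul_pow, ← zpow_natCast ((C.evOm φ θ) ^ (e : ℤ)) j,
        ← zpow_natCast (C.piOm ^ (-(h : ℤ))) j, ← zpow_mul, ← zpow_mul]]
    rw [hexp1, hexp2, zpow_add₀ hπ_ne, zpow_add₀ hφθ_ne, ← zpow_natCast (C.evOm φ θ) i]
    ring
  -- Claim 2 : `PSom = Rom` exactly
  have heq2 : C.PSom φ P h e θ = C.Rom φ P h e θ := by
    rw [PSom, Rom, P0om, Finset.mul_sum]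
    simp only [mul_ite, mul_zero]
    have hcOm : ∀ j : ℕ, C.cOm φ P h e (C.sInit φ P h e + j * e) θ * (C.gamOm φ h e θ) ^ j
        = if C.ptVal φ P h e (C.sInit φ P h e + j * e) = C.wval φ P h e then
            C.evOm (C.phiCoeff φ P (C.sInit φ P h e + j * e)) θ
              * C.piOm ^ (-(U (C.sInit φ P h e + j * e))) * (C.gamOm φ h e θ) ^ j
          else 0 := by
      intro j
      rw [cOm]
      by_cases hj : C.ptVal φ P h e (C.sInit φ P h e + j * e) = C.wval φ P h e
      · rw [if_pos hj, if_pos hj]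
      · rw [if_neg hj, if_neg hj, zero_mul]
    rw [Finset.sum_congr rfl fun j _ => hcOm j]
    rw [← Finset.sum_filter, ← Finset.sum_filter]
    refine Finset.sum_nbij' (fun i => (i - C.sInit φ P h e) / e)
      (fun j => C.sInit φ P h e + j * e) ?_ ?_ ?_ ?_ ?_
    · intro a ha
      obtain ⟨har, haQ⟩ := Finset.mem_filter.mp ha
      refine Finset.mem_filter.mpr ⟨?_, ?_⟩
      · refine Finset.mem_range.mpr (Nat.lt_succ_of_le ?_)
        exact Nat.div_le_div_right (Nat.sub_le_sub_right (ht0ge a haQ) _)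
      · rw [hback a haQ]
        exact haQ
    · intro j hj
      obtain ⟨hjr, hjQ⟩ := Finset.mem_filter.mp hj
      exact Finset.mem_filter.mpr
        ⟨Finset.mem_range.mpr (Nat.lt_succ_of_le (hSn _ hjQ)), hjQ⟩
    · intro a ha
      exact hback a (Finset.mem_filter.mp ha).2
    · intro j hj
      show (C.sInit φ P h e + j * e - C.sInit φ P h e) / e = j
      rw [Nat.add_sub_cancel_left, Nat.mul_div_cancel _ he]
    · intro a ha
      have haQ := (Finset.mem_filter.mp ha).2
      have hba := hback a haQ
      rw [hba]
      exact hval a ((a - C.sInit φ P h e) / e) haQ hba.symm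
  have hc2 : 0 < C.w (C.PSom φ P h e θ - C.Rom φ P h e θ) := by
    rw [heq2, sub_self, C.w_zero]
    exact lt_top_iff_ne_top.mpr WithTop.zero_ne_top
  -- Claim 3
  have hc3 : ((C.Hq φ P h e : ℚ) : WithTop ℚ) < C.w (C.evOm P θ - C.P0om φ P h e θ) := by
    have hPsum : C.evOm P θ
        = ∑ i ∈ Finset.range (P.natDegree + 1),
            C.evOm (C.phiCoeff φ P i) θ * (C.evOm φ θ) ^ i := by
      conv_lhs => rw [C.phiCoeff_self_sum hφm hm1 P]
      rw [C.evOm_sum]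
      exact Finset.sum_congr rfl fun i _ => by rw [C.evOm_mul, C.evOm_pow]
    rw [hPsum, P0om, ← Finset.sum_sub_distrib]
    have hcong : ∀ i ∈ Finset.range (P.natDegree + 1),
        (C.evOm (C.phiCoeff φ P i) θ * (C.evOm φ θ) ^ i
          - if C.ptVal φ P h e i = C.wval φ P h e then
              C.evOm (C.phiCoeff φ P i) θ * (C.evOm φ θ) ^ i else 0)
        = if C.ptVal φ P h e i = C.wval φ P h e then 0
          else C.evOm (C.phiCoeff φ P i) θ * (C.evOm φ θ) ^ i := by
      intro i _
      by_cases hiQ : C.ptVal φ P h e i = C.wval φ P h e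
      · rw [if_pos hiQ, if_pos hiQ, sub_self]
      · rw [if_neg hiQ, if_neg hiQ, sub_zero]
    rw [Finset.sum_congr rfl hcong]
    refine C.w_sum_gt _ _ _ (WithTop.coe_ne_top) ?_
    intro i hi
    by_cases hiQ : C.ptVal φ P h e i = C.wval φ P h e
    · rw [if_pos hiQ, C.w_zero]
      exact WithTop.coe_lt_top _
    · rw [if_neg hiQ]
      by_cases hz : C.phiCoeff φ P i = 0
      · rw [hz, C.evOm_zero, zero_mul, C.w_zero]
        exact WithTop.coe_lt_top _
      · have hle : C.wval φ P h e ≤ C.ptVal φ P h e i := Finset.inf_le hi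
        have hlt : C.wval φ P h e < C.ptVal φ P h e i := lt_of_le_of_ne hle (Ne.symm hiQ)
        rw [hqW, hptc i hz] at hlt
        have hltq : (e : ℚ) * (U (C.sInit φ P h e) : ℚ)
            + (h : ℚ) * ((C.sInit φ P h e : ℕ) : ℚ)
            < (e : ℚ) * (U i : ℚ) + (h : ℚ) * (i : ℚ) := WithTop.coe_lt_coe.mp hlt
        have hq : C.Hq φ P h e < (U i : ℚ) + (i : ℚ) * ((h : ℚ) / (e : ℚ)) := by
          rw [hHq, div_lt_iff₀ hepos]
          have hexp : ((U i : ℚ) + (i : ℚ) * ((h : ℚ) / (e : ℚ))) * (e : ℚ)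
              = (e : ℚ) * (U i : ℚ) + (h : ℚ) * (i : ℚ) := by
            field_simp
          rw [hexp]
          exact hltq
        calc ((C.Hq φ P h e : ℚ) : WithTop ℚ)
            < ((((U i : ℚ) + (i : ℚ) * ((h : ℚ) / (e : ℚ)) : ℚ)) : WithTop ℚ) :=
              WithTop.coe_lt_coe.mpr hq
          _ ≤ _ := hwt i hz
  exact ⟨hc1, hc2, hc3⟩

end PadicCtx

/-- For every nonzero `P ∈ O[x]`: the element `P^S(θ) ∈ L` satisfies `v(P^S(θ)) ≥ 0` and
its residue class in `𝔽_L` equals `R_λ(P)(γ̄)` (the residue-class equality of the two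
integral elements `P^S(θ)` and the canonical lift `∑_j c_{s+je}(θ)·γ(θ)^j` of
`R_λ(P)(γ̄)` being expressed by `v` of their difference being positive); moreover
`v(P(θ) − P⁰(θ)) > H(P)`. -/
theorem virtual_factor_value
    (C : PadicCtx p)
    (φ : Polynomial ↥(Oring p C.K)) (hφm : φ.Monic) (hφirr : Irreducible (C.redO φ))
    (f : Polynomial ↥(Oring p C.K)) (hfm : f.Monic) (hdvd : C.redO φ ∣ C.redO f)
    (h e : ℕ) (hh : 0 < h) (he : 0 < e) (hcop : Nat.Coprime h e)
    (hside : C.sInit φ f h e < C.sFin φ f h e)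
    -- the factor `f_{φ,λ}` of `f` attached to `(φ, λ)` by the Theorem of the polygon:
    (flam Gc : Polynomial ↥(Oring p C.K)) (hflamm : flam.Monic) (hGcm : Gc.Monic)
    (hsplit : f = flam * Gc)
    (hflam : ∀ F : Polynomial ↥(Oring p C.K), F.Monic → Irreducible F → F ∣ flam →
      (∃ k : ℕ, 1 ≤ k ∧ C.redO F = (C.redO φ) ^ k) ∧
      (∀ θ' : Om p, C.evOm F θ' = 0 → C.w (C.evOm φ θ') = ((h / e : ℚ) : WithTop ℚ)))
    (hGc : ∀ F : Polynomial ↥(Oring p C.K), F.Monic → Irreducible F → F ∣ Gc →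
      ¬ ((∃ k : ℕ, 1 ≤ k ∧ C.redO F = (C.redO φ) ^ k) ∧
        (∀ θ' : Om p, C.evOm F θ' = 0 → C.w (C.evOm φ θ') = ((h / e : ℚ) : WithTop ℚ))))
    -- a fixed root `θ` of `f_{φ,λ}`:
    (θ : Om p) (hθ : C.evOm flam θ = 0)
    :
    ∀ P : Polynomial ↥(Oring p C.K), P ≠ 0 →
      0 ≤ C.w (C.PSom φ P h e θ) ∧
      0 < C.w (C.PSom φ P h e θ - C.Rom φ P h e θ) ∧
      ((C.Hq φ P h e : ℚ) : WithTop ℚ) < C.w (C.evOm P θ - C.P0om φ P h e θ) := by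
  intro P hP
  have hm1 : 1 ≤ φ.natDegree := C.phi_natDegree_pos hφm hφirr
  have hθ0 : 0 ≤ C.w θ := C.w_root_nonneg hflamm hθ
  have hwφ : C.w (C.evOm φ θ) = (((h : ℚ) / (e : ℚ) : ℚ) : WithTop ℚ) := by
    obtain ⟨F, h1, h2, h3, h4⟩ :=
      C.exists_irred_factor θ flam.natDegree flam le_rfl hflamm hθ
    exact (hflam F h1 h2 h3).2 θ h4
  exact C.key φ hφm hm1 h e hh he hcop θ hθ0 hwφ P hP
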